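/- Let X ∈ GL_m(k) and Y ∈ GL_n(k). The map A ↦ XAY on k^{m×n} preserves the bilinear form ⟨A,B⟩ = trace(AB^T) (i.e. trace(XAY(XBY)^T) = trace(AB^T) for all A,B) if and only if there exists a ∈ k^× with X^T X = a·I_m and Y Y^T = a^{-1}·I_n. -/

import Mathlib

open Matrix

lemma key_trace {k : Type*} [Field k] {m n : ℕ}
    (M : Matrix (Fin m) (Fin m) k) (N : Matrix (Fin n) (Fin n) k)
    (i i' : Fin m) (j j' : Fin n) :
    Matrix.trace (M * Matrix.single i j (1:k) * N * (Matrix.single i' j' (1:k))ᵀ)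
      = M i' i * N j j' := by
  have h1 : (Matrix.single i' j' (1:k))ᵀ = Matrix.single j' i' 1 := by
    ext a b
    by_cases h : j' = a ∧ i' = b
    · obtain ⟨rfl, rfl⟩ := h; simp
    · rw [Matrix.transpose_apply, Matrix.single_apply_of_ne, Matrix.single_apply_of_ne]
      · exact h
      · tauto
  rw [h1]
  simp [Matrix.trace, Matrix.diag, Matrix.mul_apply, Matrix.single,
    Finset.sum_ite_eq, Finset.sum_ite_eq', ite_and, mul_comm]

lemma rearr_trace {k : Type*} [Field k] {m n : ℕ}
    (X : Matrix (Fin m) (Fin m) k) (Y : Matrix (Fin n) (Fin n) k)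
    (A B : Matrix (Fin m) (Fin n) k) :
    Matrix.trace (X * A * Y * (X * B * Y)ᵀ)
      = Matrix.trace ((Xᵀ * X) * A * (Y * Yᵀ) * Bᵀ) := by
  simp only [Matrix.transpose_mul, ← Matrix.mul_assoc]
  rw [Matrix.trace_mul_comm]
  simp only [← Matrix.mul_assoc]

theorem trace_form_preserving_iff
    {k : Type*} [Field k] {m n : ℕ} (hm : 0 < m) (hn : 0 < n)
    (X : Matrix (Fin m) (Fin m) k) (Y : Matrix (Fin n) (Fin n) k)
    (hX : IsUnit X.det) (hY : IsUnit Y.det) :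
    (∀ A B : Matrix (Fin m) (Fin n) k,
      Matrix.trace (X * A * Y * (X * B * Y)ᵀ) = Matrix.trace (A * Bᵀ)) ↔
    ∃ a : kˣ, Xᵀ * X = (a : k) • (1 : Matrix (Fin m) (Fin m) k) ∧
      Y * Yᵀ = ((a⁻¹ : kˣ) : k) • (1 : Matrix (Fin n) (Fin n) k) := by
  constructor
  · intro h
    set M := Xᵀ * X with hM
    set N := Y * Yᵀ with hN
    have hMN : ∀ (i i' : Fin m) (j j' : Fin n),
        M i' i * N j j' =
          (if i' = i then (1:k) else 0) * (if j = j' then (1:k) else 0) := by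
      intro i i' j j'
      have h0 := h (Matrix.single i j 1) (Matrix.single i' j' 1)
      rw [rearr_trace] at h0
      rw [key_trace] at h0
      have h1 := key_trace (1 : Matrix (Fin m) (Fin m) k)
        (1 : Matrix (Fin n) (Fin n) k) i i' j j'
      rw [Matrix.one_mul, Matrix.mul_one] at h1
      rw [h1] at h0
      simpa [Matrix.one_apply] using h0
    set i0 : Fin m := ⟨0, hm⟩
    set j0 : Fin n := ⟨0, hn⟩
    set a : k := M i0 i0 with ha
    set b : k := N j0 j0 with hb
    have hab : a * b = 1 := by simpa using hMN i0 i0 j0 j0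
    have hb0 : b ≠ 0 := fun hb' => by simp [hb'] at hab
    have ha0 : a ≠ 0 := fun ha' => by simp [ha'] at hab
    refine ⟨Units.mkOfMulEqOne a b hab, ?_, ?_⟩
    · ext p q
      by_cases hpq : p = q
      · subst hpq
        have h2 : M p p * b = 1 := by simpa using hMN p p j0 j0
        have : M p p * b = a * b := by rw [h2, hab]
        have hMp : M p p = a := mul_right_cancel₀ hb0 this
        simp [hMp, Matrix.one_apply, Units.mkOfMulEqOne]
      · have h2 : M p q * b = 0 := by simpa [hpq] using hMN q p j0 j0
        have hMp : M p q = 0 := by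
          rcases mul_eq_zero.mp h2 with h' | h'
          · exact h'
          · exact absurd h' hb0
        simp [hMp, Matrix.one_apply, hpq]
    · have hinv : ((Units.mkOfMulEqOne a b hab)⁻¹ : kˣ) = (b : k) := by
        rw [← Units.mul_eq_one_iff_inv_eq]
        exact hab
      rw [hinv]
      ext p q
      by_cases hpq : p = q
      · subst hpq
        have h2 : a * N p p = 1 := by simpa using hMN i0 i0 p p
        have : a * N p p = a * b := by rw [h2, hab]
        have hNp : N p p = b := mul_left_cancel₀ ha0 this
        simp [hNp, Matrix.one_apply]
      · have h2 : a * N p q = 0 := by simpa [hpq] using hMN i0 i0 p q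
        have hNp : N p q = 0 := by
          rcases mul_eq_zero.mp h2 with h' | h'
          · exact absurd h' ha0
          · exact h'
        simp [hNp, Matrix.one_apply, hpq]
  · rintro ⟨a, hP, hQ⟩ A B
    rw [rearr_trace, hP, hQ]
    simp [Matrix.smul_mul, Matrix.mul_smul, smul_smul, Matrix.trace_smul]
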